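/- For every integer j with 0 ≤ j ≤ min(⌊d/2⌋, n) − 1, det(N_j) = det(V(2j, 2j+1, …, d)) · det(N_{j+1}) · ∏_{ν ∈ Λ*_{d,n,j+1}} 2(ℓ_ν − ℓ_{ν_{(j)}}). -/

import Mathlib

open Finset Polynomial

namespace Capelli

/-- The set `ℙ_{k,n}` of pairs `μ = (μ₁, μ₂)` of nonnegative integers with `μ₁ ≥ μ₂`,
`μ₁ + μ₂ = k` and `μ₂ ≤ n`. -/
def Pkn (n k : ℕ) : Finset (ℕ × ℕ) :=
  (Finset.range (k + 1) ×ˢ Finset.range (k + 1)).filter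
    (fun μ => μ.2 ≤ μ.1 ∧ μ.1 + μ.2 = k ∧ μ.2 ≤ n)

/-- The set `ℙ*_{k,n}` of pairs `ν = (ν₁, ν₂)` of nonnegative integers with `ν₁ ≥ ν₂`,
`ν₁ + ν₂ = k` and `ν₂ ≥ ⌊k/2⌋ - n` (written here additively to avoid truncated subtraction). -/
def PknStar (n k : ℕ) : Finset (ℕ × ℕ) :=
  (Finset.range (k + 1) ×ˢ Finset.range (k + 1)).filter
    (fun ν => ν.2 ≤ ν.1 ∧ ν.1 + ν.2 = k ∧ k / 2 ≤ ν.2 + n)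

/-- `Λ_{d,n} = ⋃_{k=0}^d ℙ_{k,n}`. -/
def Lam (n d : ℕ) : Finset (ℕ × ℕ) := (Finset.range (d + 1)).biUnion (Pkn n)

/-- `Λ*_{d,n} = ⋃_{k=0}^d ℙ*_{k,n}`. -/
def LamStar (n d : ℕ) : Finset (ℕ × ℕ) := (Finset.range (d + 1)).biUnion (PknStar n)

/-- `ℓ_ν = min(ν₁ - ν₂, 2n + 1 - (ν₁ - ν₂))`. -/
def ell (n : ℕ) (ν : ℕ × ℕ) : ℕ := min (ν.1 - ν.2) (2 * n + 1 - (ν.1 - ν.2))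

/-- `Λ_{d,n,j} = {μ ∈ Λ_{d,n} : μ₂ ≥ j}`. -/
def Lamj (n d j : ℕ) : Finset (ℕ × ℕ) := (Lam n d).filter (fun μ => j ≤ μ.2)

/-- `Λ*_{d,n,j} = {ν ∈ Λ*_{d,n} : ν₂ ≤ ⌊|ν|/2⌋ - j}`. -/
def LamStarj (n d j : ℕ) : Finset (ℕ × ℕ) :=
  (LamStar n d).filter (fun ν => ν.2 + j ≤ (ν.1 + ν.2) / 2)

/-- `ν_{(j)} = (|ν| - ⌊|ν|/2⌋ + j, ⌊|ν|/2⌋ - j)`. -/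
def nuSub (ν : ℕ × ℕ) (j : ℕ) : ℕ × ℕ :=
  (ν.1 + ν.2 - (ν.1 + ν.2) / 2 + j, (ν.1 + ν.2) / 2 - j)

/-- The polynomial `λ_{μ,ν}(x) = ((2x+1)ℓ_ν - ℓ_ν²)^{μ₂} (ν₁+ν₂)^{μ₁-μ₂} ∈ ℤ[x]`. -/
noncomputable def lamPoly (n : ℕ) (μ ν : ℕ × ℕ) : Polynomial ℤ :=
  ((2 * X + 1) * C (ell n ν : ℤ) - C ((ell n ν : ℤ) ^ 2)) ^ μ.2 *
    C ((ν.1 + ν.2 : ℕ) : ℤ) ^ (μ.1 - μ.2)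

/-- The row ordering: `μ ⪯ μ'` iff `μ₂ < μ₂'`, or `μ₂ = μ₂'` and `μ₁ ≤ μ₁'`. -/
def rowRel (μ μ' : ℕ × ℕ) : Prop := μ.2 < μ'.2 ∨ (μ.2 = μ'.2 ∧ μ.1 ≤ μ'.1)

/-- The column ordering: `ν ⩽ ν'` iff `⌊(ν₁-ν₂)/2⌋ < ⌊(ν₁'-ν₂')/2⌋`, or these are equal and
`|ν| ≤ |ν'|`.  (A further tie-break by the first coordinate is added so that the relation is
antisymmetric on all of `ℕ × ℕ`; on `Λ*_{d,n}` a tie in the first two comparisons forces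
equality, so this agrees with the ordering of the paper there.) -/
def colRel (ν ν' : ℕ × ℕ) : Prop :=
  (ν.1 - ν.2) / 2 < (ν'.1 - ν'.2) / 2 ∨
    ((ν.1 - ν.2) / 2 = (ν'.1 - ν'.2) / 2 ∧
      (ν.1 + ν.2 < ν'.1 + ν'.2 ∨ (ν.1 + ν.2 = ν'.1 + ν'.2 ∧ ν.1 ≤ ν'.1)))

instance : DecidableRel rowRel := fun a b =>
  inferInstanceAs (Decidable (a.2 < b.2 ∨ (a.2 = b.2 ∧ a.1 ≤ b.1)))

instance : IsTrans (ℕ × ℕ) rowRel := ⟨by intro a b c; unfold rowRel; omega⟩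

instance : IsTotal (ℕ × ℕ) rowRel := ⟨by intro a b; unfold rowRel; omega⟩

instance : IsAntisymm (ℕ × ℕ) rowRel :=
  ⟨by intro a b h1 h2; unfold rowRel at h1 h2; rw [Prod.ext_iff]; omega⟩

instance : DecidableRel colRel := fun a b =>
  inferInstanceAs (Decidable ((a.1 - a.2) / 2 < (b.1 - b.2) / 2 ∨
    ((a.1 - a.2) / 2 = (b.1 - b.2) / 2 ∧
      (a.1 + a.2 < b.1 + b.2 ∨ (a.1 + a.2 = b.1 + b.2 ∧ a.1 ≤ b.1)))))

instance : IsTrans (ℕ × ℕ) colRel := ⟨by intro a b c; unfold colRel; omega⟩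

instance : IsTotal (ℕ × ℕ) colRel := ⟨by intro a b; unfold colRel; omega⟩

instance : IsAntisymm (ℕ × ℕ) colRel :=
  ⟨by intro a b h1 h2; unfold colRel at h1 h2; rw [Prod.ext_iff]; omega⟩

/-- The elements of `Λ_{d,n}` listed in increasing order for `⪯`. -/
def rowList (n d : ℕ) : List (ℕ × ℕ) := (Lam n d).sort rowRel

/-- The elements of `Λ*_{d,n}` listed in increasing order for `⩽`. -/
def colList (n d : ℕ) : List (ℕ × ℕ) := (LamStar n d).sort colRel

/-- The elements of `Λ_{d,n,j}` listed in increasing order for `⪯`. -/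
def rowListJ (n d j : ℕ) : List (ℕ × ℕ) := (Lamj n d j).sort rowRel

/-- The elements of `Λ*_{d,n,j}` listed in increasing order for `⩽`. -/
def colListJ (n d j : ℕ) : List (ℕ × ℕ) := (LamStarj n d j).sort colRel

/-- The matrix `M_d = [λ_{μ,ν}]` with rows indexed by `Λ_{d,n}` (ordered by `⪯`) and columns
indexed by `Λ*_{d,n}` (ordered by `⩽`); since `|Λ_{d,n}| = |Λ*_{d,n}|` the column list has
length `(Lam n d).card` and the `getD` access below always hits an actual entry. -/
noncomputable def Md (n d : ℕ) : Matrix (Fin (Lam n d).card) (Fin (Lam n d).card) (Polynomial ℤ) :=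
  fun i j => lamPoly n ((rowList n d).getD i.val (0, 0)) ((colList n d).getD j.val (0, 0))

/-- The matrix `M_d' = [(2ℓ_ν)^{μ₂}(ν₁+ν₂)^{μ₁-μ₂}]` of leading coefficients. -/
def Md' (n d : ℕ) : Matrix (Fin (Lam n d).card) (Fin (Lam n d).card) ℤ :=
  fun i j =>
    let μ := (rowList n d).getD i.val (0, 0)
    let ν := (colList n d).getD j.val (0, 0)
    (2 * (ell n ν : ℤ)) ^ μ.2 * ((ν.1 + ν.2 : ℕ) : ℤ) ^ (μ.1 - μ.2)

/-- `S_{μ,ν,j}` with `m = μ₂ - j`: the complete homogeneous symmetric polynomial of degree `m`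
evaluated at `ℓ_{ν_{(0)}}, …, ℓ_{ν_{(j-1)}}, ℓ_ν`, i.e. the sum over all `(j+1)`-tuples
`(a₀, …, a_j)` of nonnegative integers with `a₀ + ⋯ + a_j = m` of
`ℓ_{ν_{(0)}}^{a₀} ⋯ ℓ_{ν_{(j-1)}}^{a_{j-1}} ℓ_ν^{a_j}`. -/
def Shs (n : ℕ) (ν : ℕ × ℕ) (j m : ℕ) : ℕ :=
  ∑ a ∈ Finset.Nat.antidiagonalTuple (j + 1) m,
    ∏ i : Fin (j + 1), (if (i : ℕ) < j then ell n (nuSub ν (i : ℕ)) else ell n ν) ^ a i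

/-- The matrix `N_j = [2^{μ₂-j}(ν₁+ν₂)^{μ₁-μ₂} S_{μ,ν,j}]` with rows indexed by `Λ_{d,n,j}`
(ordered by `⪯`) and columns indexed by `Λ*_{d,n,j}` (ordered by `⩽`). -/
def Ndj (n d j : ℕ) : Matrix (Fin (Lamj n d j).card) (Fin (Lamj n d j).card) ℤ :=
  fun i i' =>
    let μ := (rowListJ n d j).getD i.val (0, 0)
    let ν := (colListJ n d j).getD i'.val (0, 0)
    2 ^ (μ.2 - j) * ((ν.1 + ν.2 : ℕ) : ℤ) ^ (μ.1 - μ.2) * (Shs n ν j (μ.2 - j) : ℤ)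

/-- The Vandermonde matrix `V(a, a+1, …, a+s-1) = [(a+j)^{i-1}]_{1 ≤ i,j ≤ s}` (0-indexed
as `[(a+j)^i]_{0 ≤ i,j ≤ s-1}`), with the convention `0⁰ = 1`. -/
def vandInt (a s : ℕ) : Matrix (Fin s) (Fin s) ℤ :=
  fun i j => ((a + (j : ℕ) : ℕ) : ℤ) ^ (i : ℕ)

/-- `f(d,s) = #{(ν,ν') ∈ Λ*_{d,n} × Λ*_{d,n} : |ν| = |ν'|, ℓ_{ν'} < ℓ_ν, ℓ_ν + ℓ_{ν'} - 1 = s}`. -/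
def fds (n d : ℕ) (s : ℤ) : ℕ :=
  (((LamStar n d) ×ˢ (LamStar n d)).filter
    (fun p => p.1.1 + p.1.2 = p.2.1 + p.2.2 ∧ ell n p.2 < ell n p.1 ∧
      (ell n p.1 : ℤ) + (ell n p.2 : ℤ) - 1 = s)).card

/-- `g_k(s) = #{(ν,ν') ∈ ℙ*_{k,n} × ℙ*_{k,n} : ℓ_{ν'} < ℓ_ν, ℓ_ν + ℓ_{ν'} - 1 = s}`. -/
def gks (n k : ℕ) (s : ℤ) : ℕ :=
  ((PknStar n k ×ˢ PknStar n k).filter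
    (fun p => ell n p.2 < ell n p.1 ∧ (ell n p.1 : ℤ) + (ell n p.2 : ℤ) - 1 = s)).card

/-! ### Auxiliary lemmas -/

lemma mem_Lamj {n d j : ℕ} {μ : ℕ × ℕ} :
    μ ∈ Lamj n d j ↔ μ.2 ≤ μ.1 ∧ μ.1 + μ.2 ≤ d ∧ μ.2 ≤ n ∧ j ≤ μ.2 := by
  unfold Lamj Lam Pkn
  rw [Finset.mem_filter, Finset.mem_biUnion]
  constructor
  · rintro ⟨⟨k, hk, hmem⟩, h6⟩
    rw [Finset.mem_range] at hk
    rw [Finset.mem_filter, Finset.mem_product, Finset.mem_range, Finset.mem_range] at hmem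
    omega
  · intro h
    refine ⟨⟨μ.1 + μ.2, ?_, ?_⟩, h.2.2.2⟩
    · rw [Finset.mem_range]; omega
    · rw [Finset.mem_filter, Finset.mem_product, Finset.mem_range, Finset.mem_range]; omega

lemma mem_LamStarj {n d j : ℕ} {ν : ℕ × ℕ} :
    ν ∈ LamStarj n d j ↔
      ν.2 ≤ ν.1 ∧ ν.1 + ν.2 ≤ d ∧ (ν.1 + ν.2) / 2 ≤ ν.2 + n ∧ ν.2 + j ≤ (ν.1 + ν.2) / 2 := by
  unfold LamStarj LamStar PknStar
  rw [Finset.mem_filter, Finset.mem_biUnion]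
  constructor
  · rintro ⟨⟨k, hk, hmem⟩, h6⟩
    rw [Finset.mem_range] at hk
    rw [Finset.mem_filter, Finset.mem_product, Finset.mem_range, Finset.mem_range] at hmem
    omega
  · intro h
    refine ⟨⟨ν.1 + ν.2, ?_, ?_⟩, h.2.2.2⟩
    · rw [Finset.mem_range]; omega
    · rw [Finset.mem_filter, Finset.mem_product, Finset.mem_range, Finset.mem_range]; omega

lemma card_LamStarj (n d j : ℕ) : (LamStarj n d j).card = (Lamj n d j).card := by
  apply Finset.card_bij'
    (i := fun ν _ => ((ν.1 + ν.2) - ((ν.1 + ν.2) / 2 - ν.2), (ν.1 + ν.2) / 2 - ν.2))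
    (j := fun μ _ => ((μ.1 + μ.2) - ((μ.1 + μ.2) / 2 - μ.2), (μ.1 + μ.2) / 2 - μ.2))
  case hi =>
    intro a ha
    rw [mem_LamStarj] at ha
    rw [mem_Lamj]
    dsimp only
    omega
  case hj =>
    intro a ha
    rw [mem_Lamj] at ha
    rw [mem_LamStarj]
    dsimp only
    omega
  case left_inv =>
    intro a ha
    rw [mem_LamStarj] at ha
    rw [Prod.ext_iff]
    dsimp only
    omega
  case right_inv =>
    intro a ha
    rw [mem_Lamj] at ha
    rw [Prod.ext_iff]
    dsimp only
    omega

/-- The first block of rows: `μ = (j + i, j)` for `0 ≤ i ≤ d - 2j`. -/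
def rowL0 (d j : ℕ) : List (ℕ × ℕ) := (List.range (d - 2*j + 1)).map (fun i => (j + i, j))

/-- The first block of columns: the special `ν` with `|ν| = 2j + i`, `ν₂ = ⌊|ν|/2⌋ - j`. -/
def colK0 (d j : ℕ) : List (ℕ × ℕ) :=
  (List.range (d - 2*j + 1)).map (fun i => (2*j + i - i/2, i/2))

lemma mem_rowL0 {d j : ℕ} (hd : 2*j ≤ d) {x : ℕ × ℕ} :
    x ∈ rowL0 d j ↔ x.2 = j ∧ j ≤ x.1 ∧ x.1 + x.2 ≤ d := by
  unfold rowL0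
  simp only [List.mem_map, List.mem_range]
  obtain ⟨x1, x2⟩ := x
  dsimp only
  constructor
  · rintro ⟨i, hi, h⟩
    rw [Prod.mk.injEq] at h
    omega
  · rintro ⟨h1, h2, h3⟩
    exact ⟨x1 - j, by omega, by rw [Prod.mk.injEq]; omega⟩

lemma mem_colK0 {d j : ℕ} (hd : 2*j ≤ d) {x : ℕ × ℕ} :
    x ∈ colK0 d j ↔ x.2 + j = (x.1 + x.2) / 2 ∧ x.2 ≤ x.1 ∧ x.1 + x.2 ≤ d := by
  unfold colK0
  simp only [List.mem_map, List.mem_range]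
  obtain ⟨x1, x2⟩ := x
  dsimp only
  constructor
  · rintro ⟨i, hi, h⟩
    rw [Prod.mk.injEq] at h
    omega
  · rintro ⟨h1, h2, h3⟩
    exact ⟨x1 + x2 - 2*j, by omega, by rw [Prod.mk.injEq]; omega⟩

lemma nodup_rowL0 (d j : ℕ) : (rowL0 d j).Nodup :=
  List.Nodup.map (fun a b h => by rw [Prod.mk.injEq] at h; omega) List.nodup_range

lemma nodup_colK0 (d j : ℕ) : (colK0 d j).Nodup :=
  List.Nodup.map (fun a b h => by rw [Prod.mk.injEq] at h; omega) List.nodup_range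

lemma rowListJ_eq (n d j : ℕ) (hjd : j + 1 ≤ d / 2) (hjn : j + 1 ≤ n) :
    rowListJ n d j = rowL0 d j ++ rowListJ n d (j + 1) := by
  unfold rowListJ
  refine (fun hp h1 h2 => List.Perm.eq_of_pairwise' h1 h2 hp) ?_ (Finset.pairwise_sort _ _) ?_
  · refine List.perm_of_nodup_nodup_toFinset_eq (Finset.sort_nodup _ _) ?_ ?_
    · rw [List.nodup_append]
      refine ⟨nodup_rowL0 d j, Finset.sort_nodup _ _, ?_⟩
      intro x hx y hx' hxy
      subst hxy
      rw [mem_rowL0 (by omega : 2*j ≤ d)] at hx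
      rw [Finset.mem_sort, mem_Lamj] at hx'
      omega
    · ext x
      rw [List.mem_toFinset, List.mem_toFinset, Finset.mem_sort, List.mem_append,
        Finset.mem_sort, mem_Lamj, mem_Lamj, mem_rowL0 (by omega : 2*j ≤ d)]
      omega
  · show List.Pairwise rowRel _
    rw [List.pairwise_append]
    refine ⟨?_, Finset.pairwise_sort _ _, ?_⟩
    · unfold rowL0
      rw [List.pairwise_map]
      refine List.pairwise_lt_range.imp ?_
      intro a b h
      unfold rowRel
      dsimp only
      omega
    · intro x hx y hy
      rw [mem_rowL0 (by omega : 2*j ≤ d)] at hx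
      rw [Finset.mem_sort, mem_Lamj] at hy
      unfold rowRel
      omega

lemma colListJ_eq (n d j : ℕ) (hjd : j + 1 ≤ d / 2) (hjn : j + 1 ≤ n) :
    colListJ n d j = colK0 d j ++ colListJ n d (j + 1) := by
  unfold colListJ
  refine (fun hp h1 h2 => List.Perm.eq_of_pairwise' h1 h2 hp) ?_ (Finset.pairwise_sort _ _) ?_
  · refine List.perm_of_nodup_nodup_toFinset_eq (Finset.sort_nodup _ _) ?_ ?_
    · rw [List.nodup_append]
      refine ⟨nodup_colK0 d j, Finset.sort_nodup _ _, ?_⟩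
      intro x hx y hx' hxy
      subst hxy
      rw [mem_colK0 (by omega : 2*j ≤ d)] at hx
      rw [Finset.mem_sort, mem_LamStarj] at hx'
      omega
    · ext x
      rw [List.mem_toFinset, List.mem_toFinset, Finset.mem_sort, List.mem_append,
        Finset.mem_sort, mem_LamStarj, mem_LamStarj, mem_colK0 (by omega : 2*j ≤ d)]
      omega
  · show List.Pairwise colRel _
    rw [List.pairwise_append]
    refine ⟨?_, Finset.pairwise_sort _ _, ?_⟩
    · unfold colK0
      rw [List.pairwise_map]
      refine List.pairwise_lt_range.imp ?_
      intro a b h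
      unfold colRel
      dsimp only
      omega
    · intro x hx y hy
      rw [mem_colK0 (by omega : 2*j ≤ d)] at hx
      rw [Finset.mem_sort, mem_LamStarj] at hy
      unfold colRel
      omega

/-! ### Complete homogeneous symmetric sums -/

/-- Complete homogeneous symmetric sum of degree `m` in `t` variables. -/
def Hs (t : ℕ) (f : Fin t → ℤ) (m : ℕ) : ℤ :=
  ∑ a ∈ Finset.Nat.antidiagonalTuple t m, ∏ i, f i ^ a i

lemma Hs_snoc (t : ℕ) (g : Fin t → ℤ) (y : ℤ) (m : ℕ) :
    Hs (t + 1) (Fin.snoc g y) m = ∑ a ∈ Finset.range (m + 1), y ^ a * Hs t g (m - a) := by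
  classical
  unfold Hs
  rw [show (∑ a ∈ Finset.range (m + 1), y ^ a *
      ∑ b ∈ Finset.Nat.antidiagonalTuple t (m - a), ∏ i, g i ^ b i) =
      ∑ p ∈ (Finset.range (m + 1)).sigma (fun a => Finset.Nat.antidiagonalTuple t (m - a)),
        y ^ p.1 * ∏ i, g i ^ p.2 i from by
    rw [Finset.sum_sigma]
    exact Finset.sum_congr rfl fun a _ => by rw [Finset.mul_sum]]
  refine Finset.sum_nbij' (fun a => ⟨a (Fin.last t), Fin.init a⟩)
    (fun p => Fin.snoc p.2 p.1) ?_ ?_ ?_ ?_ ?_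
  · intro a ha
    rw [Finset.Nat.mem_antidiagonalTuple] at ha
    rw [Fin.sum_univ_castSucc] at ha
    set S := ∑ i : Fin t, a i.castSucc with hS
    simp only [Finset.mem_sigma, Finset.mem_range, Finset.Nat.mem_antidiagonalTuple]
    have h2 : ∑ i : Fin t, Fin.init a i = S := Finset.sum_congr rfl fun i _ => rfl
    refine ⟨by omega, by omega⟩
  · intro p hp
    rw [Finset.mem_sigma, Finset.mem_range, Finset.Nat.mem_antidiagonalTuple] at hp
    rw [Finset.Nat.mem_antidiagonalTuple, Fin.sum_univ_castSucc]
    simp only [Fin.snoc_castSucc, Fin.snoc_last]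
    omega
  · intro a _
    exact Fin.snoc_init_self a
  · intro p _
    simp [Fin.init_snoc]
  · intro a _
    rw [Fin.prod_univ_castSucc, Fin.snoc_last, mul_comm]
    congr 1
    exact Finset.prod_congr rfl fun i _ => by rw [Fin.snoc_castSucc]; rfl

lemma Hs_sub (t : ℕ) (g : Fin t → ℤ) (y z : ℤ) (m : ℕ) :
    Hs (t + 1) (Fin.snoc g y) (m + 1) - Hs (t + 1) (Fin.snoc g z) (m + 1) =
      (y - z) * Hs (t + 2) (Fin.snoc (Fin.snoc g z) y) m := by
  rw [Hs_snoc, Hs_snoc, ← Finset.sum_sub_distrib]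
  have h1 : ∀ a ∈ Finset.range (m + 2),
      y ^ a * Hs t g (m + 1 - a) - z ^ a * Hs t g (m + 1 - a) =
        (y - z) * ((∑ i ∈ Finset.range a, y ^ i * z ^ (a - 1 - i)) * Hs t g (m + 1 - a)) := by
    intro a _
    rw [← sub_mul, ← geom_sum₂_mul]
    ring
  rw [Finset.sum_congr rfl h1, ← Finset.mul_sum]
  congr 1
  rw [show (∑ a ∈ Finset.range (m + 2),
      (∑ i ∈ Finset.range a, y ^ i * z ^ (a - 1 - i)) * Hs t g (m + 1 - a)) =
      ∑ p ∈ (Finset.range (m + 2)).sigma (fun a => Finset.range a),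
        y ^ p.2 * z ^ (p.1 - 1 - p.2) * Hs t g (m + 1 - p.1) from by
    rw [Finset.sum_sigma]
    exact Finset.sum_congr rfl fun a _ => by rw [Finset.sum_mul]]
  rw [Hs_snoc]
  have h2 : ∀ b ∈ Finset.range (m + 1),
      y ^ b * Hs (t + 1) (Fin.snoc g z) (m - b) =
        ∑ c ∈ Finset.range (m - b + 1), y ^ b * (z ^ c * Hs t g (m - b - c)) := by
    intro b _
    rw [Hs_snoc, Finset.mul_sum]
  rw [Finset.sum_congr rfl h2]
  rw [show (∑ b ∈ Finset.range (m + 1), ∑ c ∈ Finset.range (m - b + 1),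
      y ^ b * (z ^ c * Hs t g (m - b - c))) =
      ∑ p ∈ (Finset.range (m + 1)).sigma (fun b => Finset.range (m - b + 1)),
        y ^ p.1 * (z ^ p.2 * Hs t g (m - p.1 - p.2)) from by rw [Finset.sum_sigma]]
  refine Finset.sum_nbij' (fun p => ⟨p.2, p.1 - 1 - p.2⟩) (fun p => ⟨p.1 + p.2 + 1, p.1⟩)
    ?_ ?_ ?_ ?_ ?_
  · intro p hp
    rw [Finset.mem_sigma, Finset.mem_range, Finset.mem_range] at hp
    simp only [Finset.mem_sigma, Finset.mem_range]
    omega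
  · intro p hp
    rw [Finset.mem_sigma, Finset.mem_range, Finset.mem_range] at hp
    simp only [Finset.mem_sigma, Finset.mem_range]
    omega
  · intro p hp
    rw [Finset.mem_sigma, Finset.mem_range, Finset.mem_range] at hp
    simp only
    congr 1
    omega
  · intro p hp
    rw [Finset.mem_sigma, Finset.mem_range, Finset.mem_range] at hp
    simp only
    congr 1
    omega
  · intro p hp
    rw [Finset.mem_sigma, Finset.mem_range, Finset.mem_range] at hp
    simp only
    rw [show p.1 - 1 - p.2 = p.1 - p.2 - 1 from by omega,
        show m + 1 - p.1 = m - p.2 - (p.1 - p.2 - 1) from by omega]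
    ring

lemma Shs_cast (n : ℕ) (ν : ℕ × ℕ) (j m : ℕ) :
    (Shs n ν j m : ℤ) = Hs (j + 1)
      (fun i => if (i : ℕ) < j then (ell n (nuSub ν (i : ℕ)) : ℤ) else (ell n ν : ℤ)) m := by
  unfold Shs Hs
  push_cast
  refine Finset.sum_congr rfl fun a _ => Finset.prod_congr rfl fun i _ => ?_
  split_ifs <;> rfl

lemma Shs_zero (n : ℕ) (ν : ℕ × ℕ) (j : ℕ) : Shs n ν j 0 = 1 := by
  unfold Shs
  rw [Finset.Nat.antidiagonalTuple_zero_right, Finset.sum_singleton]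
  simp

lemma ite_eq_snoc (j : ℕ) (F : ℕ → ℤ) (Y : ℤ) :
    (fun i : Fin (j + 1) => if (i : ℕ) < j then F (i : ℕ) else Y) =
      Fin.snoc (fun i : Fin j => F (i : ℕ)) Y := by
  funext i
  rcases lt_or_ge (i : ℕ) j with h | h
  · rw [if_pos h]
    have hi : i = Fin.castSucc ⟨(i : ℕ), h⟩ := by
      apply Fin.ext
      rfl
    rw [hi, Fin.snoc_castSucc]
    rfl
  · have hi : i = Fin.last j := by
      apply Fin.ext
      have := i.isLt
      simp only [Fin.val_last]
      omega
    rw [if_neg (by omega), hi, Fin.snoc_last]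

lemma nuSub_sum {ν : ℕ × ℕ} {j : ℕ} (h : j ≤ (ν.1 + ν.2) / 2) :
    (nuSub ν j).1 + (nuSub ν j).2 = ν.1 + ν.2 := by
  unfold nuSub
  dsimp only
  omega

lemma nuSub_nuSub {ν : ℕ × ℕ} {j : ℕ} (h : j ≤ (ν.1 + ν.2) / 2) (i : ℕ) :
    nuSub (nuSub ν j) i = nuSub ν i := by
  have := nuSub_sum h
  unfold nuSub at this ⊢
  rw [Prod.ext_iff]
  dsimp only
  omega

lemma shs_key (n : ℕ) (ν : ℕ × ℕ) (j m : ℕ) (h : j ≤ (ν.1 + ν.2) / 2) :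
    (Shs n ν j (m + 1) : ℤ) - (Shs n (nuSub ν j) j (m + 1) : ℤ)
      = ((ell n ν : ℤ) - (ell n (nuSub ν j) : ℤ)) * (Shs n ν (j + 1) m : ℤ) := by
  have h5 : ∀ W : ℤ,
      (fun i : Fin (j + 1) => if (i : ℕ) < j then (ell n (nuSub ν (i : ℕ)) : ℤ) else W) =
        Fin.snoc (fun i : Fin j => (ell n (nuSub ν (i : ℕ)) : ℤ)) W :=
    fun W => ite_eq_snoc j (fun t => (ell n (nuSub ν t) : ℤ)) W
  have h6 : (fun i : Fin (j + 1) =>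
        if (i : ℕ) < j then (ell n (nuSub (nuSub ν j) (i : ℕ)) : ℤ)
        else (ell n (nuSub ν j) : ℤ)) =
      Fin.snoc (fun i : Fin j => (ell n (nuSub ν (i : ℕ)) : ℤ)) (ell n (nuSub ν j) : ℤ) := by
    have hinner : (fun i : Fin j => (ell n (nuSub (nuSub ν j) (i : ℕ)) : ℤ)) =
        (fun i : Fin j => (ell n (nuSub ν (i : ℕ)) : ℤ)) := by
      funext i
      rw [nuSub_nuSub h]
    rw [ite_eq_snoc j (fun t => (ell n (nuSub (nuSub ν j) t) : ℤ)) _, hinner]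
  have hmid : (fun i : Fin (j + 1) => (ell n (nuSub ν (i : ℕ)) : ℤ)) =
      Fin.snoc (fun i : Fin j => (ell n (nuSub ν (i : ℕ)) : ℤ)) (ell n (nuSub ν j) : ℤ) := by
    funext i
    rcases lt_or_ge (i : ℕ) j with hij | hij
    · have hi : i = Fin.castSucc (⟨(i : ℕ), hij⟩ : Fin j) := by
        apply Fin.ext
        rfl
      rw [hi, Fin.snoc_castSucc]
      rfl
    · have hi : i = Fin.last j := by
        apply Fin.ext
        have := i.isLt
        simp only [Fin.val_last]
        omega
      rw [hi, Fin.snoc_last]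
      rfl
  have h7 : (fun i : Fin (j + 1 + 1) =>
        if (i : ℕ) < j + 1 then (ell n (nuSub ν (i : ℕ)) : ℤ) else (ell n ν : ℤ)) =
      Fin.snoc (Fin.snoc (fun i : Fin j => (ell n (nuSub ν (i : ℕ)) : ℤ))
        (ell n (nuSub ν j) : ℤ)) (ell n ν : ℤ) := by
    rw [ite_eq_snoc (j + 1) (fun t => (ell n (nuSub ν t) : ℤ)) _, hmid]
  rw [Shs_cast, Shs_cast, Shs_cast, h5, h6, h7]
  exact Hs_sub j _ _ _ m

/-! ### Matrix ingredients for the proof -/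

/-- Entry of the list `rowListJ` (as a function of a natural index). -/
def rowGet (n d j : ℕ) (r : ℕ) : ℕ × ℕ := (rowListJ n d j).getD r (0, 0)

/-- Entry of the list `colListJ` (as a function of a natural index). -/
def colGet (n d j : ℕ) (c : ℕ) : ℕ × ℕ := (colListJ n d j).getD c (0, 0)

/-- The generic entry of the matrix `N_j`. -/
def entryE (n j : ℕ) (μ ν : ℕ × ℕ) : ℤ :=
  2 ^ (μ.2 - j) * ((ν.1 + ν.2 : ℕ) : ℤ) ^ (μ.1 - μ.2) * (Shs n ν j (μ.2 - j) : ℤ)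

lemma Ndj_apply (n d j : ℕ) (i i' : Fin (Lamj n d j).card) :
    Ndj n d j i i' = entryE n j (rowGet n d j (i : ℕ)) (colGet n d j (i' : ℕ)) := rfl

/-- The lower-left block of `N_j` after reordering. -/
def CMat (n d j : ℕ) : Matrix (Fin (Lamj n d (j+1)).card) (Fin (d - 2*j + 1)) ℤ :=
  fun r i' => entryE n j (rowGet n d (j+1) (r : ℕ)) ((colK0 d j).getD (i' : ℕ) (0, 0))

/-- The scalar factors `2(ℓ_ν - ℓ_{ν_{(j)}})`. -/
def wgt (n d j : ℕ) (c : Fin (Lamj n d (j+1)).card) : ℤ :=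
  2 * ((ell n (colGet n d (j+1) (c : ℕ)) : ℤ) -
    (ell n (nuSub (colGet n d (j+1) (c : ℕ)) j) : ℤ))

/-- The lower-right block after the column operations. -/
def DMat (n d j : ℕ) :
    Matrix (Fin (Lamj n d (j+1)).card) (Fin (Lamj n d (j+1)).card) ℤ :=
  fun r c => wgt n d j c * Ndj n d (j+1) r c

/-- The elementary-column-operation block. -/
def PMat (n d j : ℕ) : Matrix (Fin (d - 2*j + 1)) (Fin (Lamj n d (j+1)).card) ℤ :=
  fun i c => if (i : ℕ) = (colGet n d (j+1) (c : ℕ)).1 + (colGet n d (j+1) (c : ℕ)).2 - 2*j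
    then 1 else 0

/-- For every integer `j` with `0 ≤ j ≤ min(⌊d/2⌋, n) - 1`,
`det(N_j) = det(V(2j, 2j+1, …, d)) · det(N_{j+1}) · ∏_{ν ∈ Λ*_{d,n,j+1}} 2(ℓ_ν - ℓ_{ν_{(j)}})`. -/
theorem det_Ndj (n d j : ℕ) (hj : j + 1 ≤ min (d / 2) n) :
    (Ndj n d j).det =
      (vandInt (2 * j) (d - 2 * j + 1)).det * (Ndj n d (j + 1)).det *
        ∏ ν ∈ LamStarj n d (j + 1), 2 * ((ell n ν : ℤ) - (ell n (nuSub ν j) : ℤ)) := by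
  have hjd : j + 1 ≤ d / 2 := hj.trans (min_le_left _ _)
  have hjn : j + 1 ≤ n := hj.trans (min_le_right _ _)
  set m := d - 2 * j + 1 with hm
  set N' := (Lamj n d (j + 1)).card with hN'
  have hrow := rowListJ_eq n d j hjd hjn
  have hcol := colListJ_eq n d j hjd hjn
  have hlen0 : (rowL0 d j).length = m := by rw [rowL0, List.length_map, List.length_range]
  have hlenK0 : (colK0 d j).length = m := by rw [colK0, List.length_map, List.length_range]
  have hlrow1 : (rowListJ n d (j + 1)).length = N' := Finset.length_sort _
  have hlcol1 : (colListJ n d (j + 1)).length = N' := by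
    rw [colListJ, Finset.length_sort, card_LamStarj]
  have hcard : (Lamj n d j).card = m + N' := by
    have h0 : (rowListJ n d j).length = (Lamj n d j).card := Finset.length_sort _
    rw [← h0, hrow, List.length_append, hlen0, hlrow1]
  have hK0get : ∀ i' : Fin m, (colK0 d j).getD (i' : ℕ) (0, 0) =
      (2 * j + (i' : ℕ) - (i' : ℕ) / 2, (i' : ℕ) / 2) := by
    intro i'
    rw [colK0, List.getD_eq_getElem _ _
      (by rw [List.length_map, List.length_range]; exact i'.isLt)]
    simp
  have hgetRl : ∀ i : Fin m, rowGet n d j (i : ℕ) = (j + (i : ℕ), j) := by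
    intro i
    rw [rowGet, hrow, List.getD_append _ _ _ _ (by rw [hlen0]; exact i.isLt)]
    rw [rowL0, List.getD_eq_getElem _ _
      (by rw [List.length_map, List.length_range]; exact i.isLt)]
    simp
  have hgetKl : ∀ i' : Fin m, colGet n d j (i' : ℕ) =
      (2 * j + (i' : ℕ) - (i' : ℕ) / 2, (i' : ℕ) / 2) := by
    intro i'
    rw [colGet, hcol, List.getD_append _ _ _ _ (by rw [hlenK0]; exact i'.isLt)]
    exact hK0get i'
  have hgetRr : ∀ r : Fin N', rowGet n d j (m + (r : ℕ)) = rowGet n d (j + 1) (r : ℕ) := by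
    intro r
    rw [rowGet, rowGet, hrow, List.getD_append_right _ _ _ _ (by rw [hlen0]; omega), hlen0]
    congr 1
    omega
  have hgetKr : ∀ c : Fin N', colGet n d j (m + (c : ℕ)) = colGet n d (j + 1) (c : ℕ) := by
    intro c
    rw [colGet, colGet, hcol, List.getD_append_right _ _ _ _ (by rw [hlenK0]; omega), hlenK0]
    congr 1
    omega
  have hrmem : ∀ r : Fin N', rowGet n d (j + 1) (r : ℕ) ∈ Lamj n d (j + 1) := by
    intro r
    rw [rowGet, List.getD_eq_getElem _ _ (by rw [hlrow1]; exact r.isLt)]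
    have hmem : (rowListJ n d (j + 1))[(r : ℕ)]'(by rw [hlrow1]; exact r.isLt) ∈
        rowListJ n d (j + 1) := List.getElem_mem _
    exact (Finset.mem_sort _).1 hmem
  have hcmem : ∀ c : Fin N', colGet n d (j + 1) (c : ℕ) ∈ LamStarj n d (j + 1) := by
    intro c
    rw [colGet, List.getD_eq_getElem _ _ (by rw [hlcol1]; exact c.isLt)]
    have hmem : (colListJ n d (j + 1))[(c : ℕ)]'(by rw [hlcol1]; exact c.isLt) ∈
        colListJ n d (j + 1) := List.getElem_mem _
    exact (Finset.mem_sort _).1 hmem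
  set e : Fin m ⊕ Fin N' ≃ Fin (Lamj n d j).card :=
    finSumFinEquiv.trans (finCongr hcard.symm) with he
  have hvl : ∀ i : Fin m, ((e (Sum.inl i)) : ℕ) = (i : ℕ) := by
    intro i
    rw [he]
    simp
  have hvr : ∀ c : Fin N', ((e (Sum.inr c)) : ℕ) = m + (c : ℕ) := by
    intro c
    rw [he]
    simp
  have hsub : (Ndj n d j).submatrix e e =
      Matrix.fromBlocks (vandInt (2 * j) m) 0 (CMat n d j) (DMat n d j) *
        Matrix.fromBlocks 1 (PMat n d j) 0 1 := by
    rw [Matrix.fromBlocks_multiply]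
    simp only [Matrix.mul_one, Matrix.mul_zero, Matrix.zero_mul, Matrix.one_mul,
      add_zero, zero_add]
    ext x y
    rcases x with i | r <;> rcases y with i' | c
    · rw [Matrix.submatrix_apply, Matrix.fromBlocks_apply₁₁]
      rw [Ndj_apply, hvl, hvl, hgetRl, hgetKl]
      unfold entryE vandInt
      try dsimp only
      rw [Nat.sub_self, pow_zero, Shs_zero, Nat.cast_one, mul_one, one_mul]
      have hb : (2 * j + (i' : ℕ) - (i' : ℕ) / 2) + (i' : ℕ) / 2 = 2 * j + (i' : ℕ) := by omega
      have he2 : j + (i : ℕ) - j = (i : ℕ) := by omega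
      rw [hb, he2]
    · rw [Matrix.submatrix_apply, Matrix.fromBlocks_apply₁₂]
      rw [Ndj_apply, hvl, hvr, hgetRl, hgetKr]
      obtain ⟨hv1, hv2, hv3, hv4⟩ := mem_LamStarj.mp (hcmem c)
      set ν := colGet n d (j + 1) (c : ℕ) with hν
      have hsc : ν.1 + ν.2 - 2 * j < m := by omega
      rw [Matrix.mul_apply, Fintype.sum_eq_single (⟨ν.1 + ν.2 - 2 * j, hsc⟩ : Fin m)
        (fun b hb => by
          unfold PMat
          try dsimp only
          rw [← hν, if_neg (fun hh => hb (Fin.ext hh)), mul_zero])]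
      unfold PMat
      try dsimp only
      rw [← hν, if_pos rfl, mul_one]
      unfold entryE vandInt
      try dsimp only
      rw [Nat.sub_self, pow_zero, Shs_zero, Nat.cast_one, mul_one, one_mul]
      have hb : 2 * j + (ν.1 + ν.2 - 2 * j) = ν.1 + ν.2 := by omega
      have he2 : j + (i : ℕ) - j = (i : ℕ) := by omega
      rw [hb, he2]
    · rw [Matrix.submatrix_apply, Matrix.fromBlocks_apply₂₁]
      rw [Ndj_apply, hvr, hvl, hgetRr, hgetKl]
      unfold CMat
      try dsimp only
      rw [hK0get i']
    · rw [Matrix.submatrix_apply, Matrix.fromBlocks_apply₂₂]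
      rw [Ndj_apply, hvr, hvr, hgetRr, hgetKr]
      obtain ⟨hw1, hw2, hw3, hw4⟩ := mem_LamStarj.mp (hcmem c)
      obtain ⟨hu1, hu2, hu3, hu4⟩ := mem_Lamj.mp (hrmem r)
      set μ := rowGet n d (j + 1) (r : ℕ) with hμ
      set ν := colGet n d (j + 1) (c : ℕ) with hν
      have hsc : ν.1 + ν.2 - 2 * j < m := by omega
      rw [Matrix.add_apply, Matrix.mul_apply, Fintype.sum_eq_single
        (⟨ν.1 + ν.2 - 2 * j, hsc⟩ : Fin m)
        (fun b hb => by
          unfold PMat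
          try dsimp only
          rw [← hν, if_neg (fun hh => hb (Fin.ext hh)), mul_zero])]
      unfold PMat
      try dsimp only
      rw [← hν, if_pos rfl, mul_one]
      unfold CMat
      try dsimp only
      rw [← hμ, hK0get ⟨ν.1 + ν.2 - 2 * j, hsc⟩]
      have hnu : ((2 * j + (ν.1 + ν.2 - 2 * j) - (ν.1 + ν.2 - 2 * j) / 2,
          (ν.1 + ν.2 - 2 * j) / 2) : ℕ × ℕ) = nuSub ν j := by
        rw [nuSub, Prod.ext_iff]
        try dsimp only
        omega
      unfold DMat
      rw [hnu, Ndj_apply, ← hμ, ← hν]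
      unfold entryE wgt
      rw [← hν]
      have hsum2 : (nuSub ν j).1 + (nuSub ν j).2 = ν.1 + ν.2 := nuSub_sum (by omega)
      have hMM : μ.2 - j = (μ.2 - (j + 1)) + 1 := by omega
      have hkey := shs_key n ν j (μ.2 - (j + 1)) (by omega)
      rw [hsum2, hMM]
      linear_combination
        ((2 : ℤ) ^ ((μ.2 - (j + 1)) + 1) * ((ν.1 + ν.2 : ℕ) : ℤ) ^ (μ.1 - μ.2)) * hkey
  conv_lhs => rw [← Matrix.det_submatrix_equiv_self e]
  rw [hsub, Matrix.det_mul, Matrix.det_fromBlocks_zero₂₁, Matrix.det_one, Matrix.det_one,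
    mul_one, mul_one, Matrix.det_fromBlocks_zero₁₂]
  have hD : DMat n d j = Ndj n d (j + 1) * Matrix.diagonal (wgt n d j) := by
    ext r c
    rw [Matrix.mul_diagonal]
    unfold DMat
    ring
  rw [hD, Matrix.det_mul, Matrix.det_diagonal]
  have hprod : ∏ c : Fin N', wgt n d j c =
      ∏ ν ∈ LamStarj n d (j + 1), 2 * ((ell n ν : ℤ) - (ell n (nuSub ν j) : ℤ)) := by
    set f : ℕ × ℕ → ℤ := fun ν => 2 * ((ell n ν : ℤ) - (ell n (nuSub ν j) : ℤ)) with hf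
    have hlist : ∏ ν ∈ LamStarj n d (j + 1), f ν = ((colListJ n d (j + 1)).map f).prod := by
      rw [Finset.prod_eq_multiset_prod, ← Finset.sort_eq (LamStarj n d (j + 1)) colRel,
        Multiset.map_coe, Multiset.prod_coe]
      rfl
    rw [hlist]
    have h2 : ∀ c : Fin N', wgt n d j c =
        f ((colListJ n d (j + 1)).get (Fin.cast hlcol1.symm c)) := by
      intro c
      unfold wgt colGet
      rw [hf, List.getD_eq_getElem _ _ (by rw [hlcol1]; exact c.isLt)]
      rfl
    rw [Finset.prod_congr rfl (fun c _ => h2 c)]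
    rw [Fintype.prod_equiv (finCongr hlcol1.symm)
      (fun c => f ((colListJ n d (j + 1)).get (Fin.cast hlcol1.symm c)))
      (fun c => f ((colListJ n d (j + 1)).get c)) (fun c => rfl)]
    rw [← List.prod_ofFn]
    congr 1
    conv_rhs => rw [← List.ofFn_get (colListJ n d (j + 1)), List.map_ofFn]
    rfl
  rw [hprod]
  ring

end Capelli
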